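/- Let k be an algebraically closed field of characteristic 0, and let f, h, a ∈ k⟨x⟩ with a ≠ 0 and f·a = a·h. Then for every n ∈ ℕ and every tuple X ∈ Mₙ(k)^d, the characteristic polynomial of f(X) equals the characteristic polynomial of h(X); in particular det(f(X) − λ·I) = det(h(X) − λ·I) for all λ ∈ k, so L_λ(f) = L_λ(h) for all λ ∈ k. -/

import Mathlib

/-- Evaluation of `f ∈ k⟨x⟩` at a `d`-tuple of `n × n` matrices. -/
noncomputable def matEval (k : Type*) [CommSemiring k] (d n : ℕ)
    (X : Fin d → Matrix (Fin n) (Fin n) k) :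
    FreeAlgebra k (Fin d) →ₐ[k] Matrix (Fin n) (Fin n) k :=
  FreeAlgebra.lift k X

namespace CharIntw

open Polynomial
open Fin.NatCast

variable {k : Type*} [Field k] {d : ℕ}

/-- Generic evaluation of the free algebra at a matrix tuple over a commutative `k`-algebra. -/
noncomputable def evalMat (R : Type*) [CommRing R] [Algebra k R] {N : ℕ}
    (Z : Fin d → Matrix (Fin N) (Fin N) R) :
    FreeAlgebra k (Fin d) →ₐ[k] Matrix (Fin N) (Fin N) R :=
  FreeAlgebra.lift k Z

@[simp] theorem evalMat_ι (R : Type*) [CommRing R] [Algebra k R] {N : ℕ}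
    (Z : Fin d → Matrix (Fin N) (Fin N) R) (i : Fin d) :
    evalMat (k := k) R Z (FreeAlgebra.ι k i) = Z i := by
  simp [evalMat]

theorem evalMat_map {R S : Type*} [CommRing R] [Algebra k R] [CommRing S] [Algebra k S]
    (φ : R →ₐ[k] S) {N : ℕ} (Z : Fin d → Matrix (Fin N) (Fin N) R) (b : FreeAlgebra k (Fin d)) :
    (evalMat (k := k) R Z b).map φ = evalMat (k := k) S (fun i => (Z i).map φ) b := by
  have h : (φ.mapMatrix.comp (evalMat (k := k) R Z)) =
      evalMat (k := k) S (fun i => (Z i).map φ) := by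
    apply FreeAlgebra.hom_ext
    funext i
    simp
  exact DFunLike.congr_fun h b

theorem evalMat_expand {R : Type*} [CommRing R] [Algebra k R] {N : ℕ}
    (Z : Fin d → Matrix (Fin N) (Fin N) R) (A : MonoidAlgebra k (FreeMonoid (Fin d))) :
    evalMat (k := k) R Z (((FreeAlgebra.equivMonoidAlgebraFreeMonoid (R := k) (X := Fin d))).symm A)
      = A.coeff.sum fun w c => c • (FreeMonoid.lift Z w) := by
  set e := (FreeAlgebra.equivMonoidAlgebraFreeMonoid (R := k) (X := Fin d))
  have h : (MonoidAlgebra.lift k _ (FreeMonoid (Fin d)) (FreeMonoid.lift Z)).comp e.toAlgHom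
      = evalMat (k := k) R Z := by
    apply FreeAlgebra.hom_ext
    funext i
    have he : e (FreeAlgebra.ι k i)
        = MonoidAlgebra.single (FreeMonoid.of i) (1 : k) := by
      simp [e, FreeAlgebra.equivMonoidAlgebraFreeMonoid]
    simp [he, MonoidAlgebra.lift_single]
  have := DFunLike.congr_fun h (e.symm A)
  simp only [AlgHom.coe_comp, Function.comp_apply, AlgEquiv.coe_algHom,
    AlgEquiv.apply_symm_apply] at this
  rw [← this, MonoidAlgebra.lift_apply]


section Size
variable {R : Type*} [CommRing R] [Algebra k R] {N : ℕ} [NeZero N]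

/-- Cyclic weighted shift matrices. -/
def shiftM (u : Fin d → Fin N → R) (i : Fin d) : Matrix (Fin N) (Fin N) R :=
  Matrix.of fun p q => if p = q + 1 then u i q else 0

/-- Weight of a word along the cyclic shift starting at position `q`. -/
def wgt (u : Fin d → Fin N → R) : List (Fin d) → Fin N → R
  | [], _ => 1
  | i :: w, q => u i (q + (w.length : Fin N)) * wgt u w q

theorem shiftM_word (u : Fin d → Fin N → R) (w : List (Fin d)) (p q : Fin N) :
    (w.map (shiftM u)).prod p q
      = if p = q + ((w.length : ℕ) : Fin N) then wgt u w q else 0 := by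
  induction w generalizing p q with
  | nil => simp [Matrix.one_apply, wgt]
  | cons i w ih =>
    have hlen : (((i :: w).length : ℕ) : Fin N) = ((w.length : ℕ) : Fin N) + 1 := by
      push_cast [List.length_cons]
      ring
    rw [List.map_cons, List.prod_cons, Matrix.mul_apply]
    have hsum : ∀ r : Fin N, shiftM u i p r * (w.map (shiftM u)).prod r q
        = if r = q + ((w.length : ℕ) : Fin N) then
            (if p = r + 1 then u i r else 0) * wgt u w q else 0 := by
      intro r
      rw [ih]
      by_cases hr : r = q + ((w.length : ℕ) : Fin N) <;> simp [shiftM, hr]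
    rw [Finset.sum_congr rfl fun r _ => hsum r, Finset.sum_ite_eq' Finset.univ]
    simp only [Finset.mem_univ, if_true]
    rw [hlen, ← add_assoc]
    by_cases hp : p = q + ((w.length : ℕ) : Fin N) + 1 <;> simp [hp, wgt]


theorem evalMat_shift_apply (u : Fin d → Fin N → R)
    (A : MonoidAlgebra k (FreeMonoid (Fin d))) (p q : Fin N) :
    evalMat (k := k) R (shiftM u)
        ((FreeAlgebra.equivMonoidAlgebraFreeMonoid (R := k) (X := Fin d)).symm A) p q
      = ∑ w ∈ A.coeff.support,
          A.coeff w • (if p = q + ((FreeMonoid.length w : ℕ) : Fin N) then wgt u w.toList q else 0) := by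
  rw [evalMat_expand]
  rw [Finsupp.sum]
  rw [Matrix.sum_apply]
  refine Finset.sum_congr rfl fun w _ => ?_
  rw [Matrix.smul_apply, FreeMonoid.lift_apply, shiftM_word]
  rfl


noncomputable def mexp : List (Fin d) → Fin N → ((Fin d × Fin N) →₀ ℕ)
  | [], _ => 0
  | i :: w, q => Finsupp.single (i, q + ((w.length : ℕ) : Fin N)) 1 + mexp w q

noncomputable def uP (k : Type*) [Field k] (d N : ℕ) [NeZero N] :
    Fin d → Fin N → MvPolynomial (Fin d × Fin N) k :=
  fun i q => MvPolynomial.X (i, q)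

theorem wgt_uP (w : List (Fin d)) (q : Fin N) :
    wgt (uP k d N) w q = MvPolynomial.monomial (mexp w q) 1 := by
  induction w generalizing q with
  | nil =>
    show (1 : MvPolynomial (Fin d × Fin N) k) = _
    simp [mexp]
  | cons i w ih =>
    rw [wgt, ih, uP, MvPolynomial.X, MvPolynomial.monomial_mul, one_mul, mexp]

theorem mexp_pos (w : List (Fin d)) (q : Fin N) (i : Fin d) (p : Fin N)
    (hp : mexp w q (i, p) ≠ 0) : ∃ r < w.length, p = q + ((r : ℕ) : Fin N) := by
  induction w generalizing p i with
  | nil => simp [mexp] at hp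
  | cons j w ih =>
    rw [mexp, Finsupp.add_apply] at hp
    by_cases h1 : mexp w q (i, p) ≠ 0
    · obtain ⟨r, hr, hpr⟩ := ih _ _ h1
      exact ⟨r, Nat.lt_succ_of_lt hr, hpr⟩
    · push_neg at h1
      rw [h1, add_zero] at hp
      have := Finsupp.single_apply_ne_zero.mp hp
      obtain ⟨hpair, -⟩ := this
      obtain ⟨-, hp2⟩ := Prod.mk.injEq .. ▸ hpair
      exact ⟨w.length, Nat.lt_succ_self _, by rw [← hp2]⟩

theorem mexp_zero_of_len (w : List (Fin d)) (q : Fin N) (i : Fin d) {n : ℕ}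
    (hw : w.length ≤ n) (hn : n < N) : mexp w q (i, q + ((n : ℕ) : Fin N)) = 0 := by
  by_contra hne
  obtain ⟨r, hr, hpr⟩ := mexp_pos w q i _ hne
  have hrn : ((r : ℕ) : Fin N) = ((n : ℕ) : Fin N) := by
    have := add_left_cancel hpr.symm
    exact this
  have : r = n := by
    have h1 := congrArg Fin.val hrn
    rwa [Fin.val_cast_of_lt (lt_of_lt_of_le hr (le_of_lt (lt_of_le_of_lt hw hn))),
      Fin.val_cast_of_lt hn] at h1
  omega

theorem mexp_inj (w w' : List (Fin d)) (q : Fin N) (hlen : w.length = w'.length)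
    (hN : w.length < N) (h : mexp w q = mexp w' q) : w = w' := by
  induction w generalizing w' with
  | nil => cases w' with
    | nil => rfl
    | cons => simp at hlen
  | cons i w ih =>
    cases w' with
    | nil => simp at hlen
    | cons i' w' =>
      have hl : w.length = w'.length := by simpa using hlen
      have hwN : w.length < N := by
        simp only [List.length_cons] at hN; omega
      have happ := congrFun (congrArg (DFunLike.coe) h) (i, q + ((w.length : ℕ) : Fin N))
      rw [mexp, mexp, ← hl, Finsupp.add_apply, Finsupp.add_apply,
        mexp_zero_of_len w q i le_rfl hwN,
        mexp_zero_of_len w' q i (le_of_eq hl.symm) hwN, add_zero, add_zero,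
        Finsupp.single_eq_same] at happ
      have hii : i' = i := by
        by_contra hne
        rw [Finsupp.single_apply, if_neg (by simp [hne])] at happ
        exact one_ne_zero happ
      subst hii
      rw [mexp, mexp, ← hl] at h
      have h2 := add_left_cancel h
      rw [ih w' hl hwN h2]


noncomputable def Qp (A : MonoidAlgebra k (FreeMonoid (Fin d))) (D : ℕ) (j : Fin N) :
    MvPolynomial (Fin d × Fin N) k :=
  ∑ w ∈ A.coeff.support.filter (fun w => FreeMonoid.length w = D),
    MvPolynomial.C (A.coeff w) * wgt (uP k d N) w.toList j

theorem Qp_ne_zero (A : MonoidAlgebra k (FreeMonoid (Fin d))) (hA : A ≠ 0)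
    (hN : A.coeff.support.sup FreeMonoid.length < N) (j : Fin N) :
    Qp A (A.coeff.support.sup FreeMonoid.length) j ≠ 0 := by
  set D := A.coeff.support.sup FreeMonoid.length with hD
  obtain ⟨w₀, hw₀, hw₀D⟩ := Finset.exists_mem_eq_sup A.coeff.support
    (Finsupp.support_nonempty_iff.mpr (mt MonoidAlgebra.coeff_eq_zero.mp hA)) FreeMonoid.length
  have hcoeff : MvPolynomial.coeff (mexp w₀.toList j) (Qp A D j) = A.coeff w₀ := by
    rw [Qp, MvPolynomial.coeff_sum]
    rw [Finset.sum_eq_single w₀]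
    · rw [wgt_uP, MvPolynomial.coeff_C_mul, MvPolynomial.coeff_monomial, if_pos rfl, mul_one]
    · intro w hw hne
      rw [wgt_uP, MvPolynomial.coeff_C_mul, MvPolynomial.coeff_monomial, if_neg, mul_zero]
      intro hmexp
      apply hne
      have hlenw : w.toList.length = D := (Finset.mem_filter.mp hw).2
      have hlenw₀ : w₀.toList.length = D := hw₀D.symm
      have := mexp_inj w.toList w₀.toList j (by rw [hlenw, hlenw₀]) (by omega) hmexp
      exact FreeMonoid.toList.injective this
    · intro hnmem
      exfalso
      exact hnmem (Finset.mem_filter.mpr ⟨hw₀, hw₀D.symm⟩)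
  intro hzero
  rw [hzero, MvPolynomial.coeff_zero] at hcoeff
  exact (Finsupp.mem_support_iff.mp hw₀) hcoeff.symm

theorem exists_tau [Infinite k] (A : MonoidAlgebra k (FreeMonoid (Fin d))) (hA : A ≠ 0)
    (hN : A.coeff.support.sup FreeMonoid.length < N) :
    ∃ τ : (Fin d × Fin N) → k, ∀ j : Fin N,
      MvPolynomial.eval τ (Qp A (A.coeff.support.sup FreeMonoid.length) j) ≠ 0 := by
  have hprod : (∏ j : Fin N, Qp A (A.coeff.support.sup FreeMonoid.length) j) ≠ 0 :=
    Finset.prod_ne_zero_iff.mpr fun j _ => Qp_ne_zero A hA hN j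
  by_contra hcon
  push_neg at hcon
  apply hprod
  apply MvPolynomial.funext (q := 0)
  intro x
  obtain ⟨j, hj⟩ := hcon x
  rw [map_prod, map_zero]
  exact Finset.prod_eq_zero (Finset.mem_univ j) hj


/-- Weights in `k[X]`: generic weight times the variable. -/
noncomputable def uX (t : Fin d → Fin N → k) : Fin d → Fin N → k[X] :=
  fun i q => C (t i q) * X

theorem wgt_uX (t : Fin d → Fin N → k) (w : List (Fin d)) (q : Fin N) :
    wgt (uX t) w q = C (wgt t w q) * X ^ w.length := by
  induction w generalizing q with
  | nil => simp [wgt]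
  | cons i w ih =>
    rw [wgt, ih, wgt]
    simp only [uX, map_mul, List.length_cons, pow_succ]
    ring

theorem M_entry (t : Fin d → Fin N → k) (A : MonoidAlgebra k (FreeMonoid (Fin d)))
    (hN : A.coeff.support.sup FreeMonoid.length < N) (p q : Fin N) :
    evalMat (k := k) (k[X]) (shiftM (uX t))
        ((FreeAlgebra.equivMonoidAlgebraFreeMonoid (R := k) (X := Fin d)).symm A) p q
      = C (∑ w ∈ A.coeff.support.filter (fun w => FreeMonoid.length w = ((p - q : Fin N)).val),
            A.coeff w * wgt t w.toList q) * X ^ ((p - q : Fin N)).val := by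
  rw [evalMat_shift_apply]
  have hterm : ∀ w ∈ A.coeff.support,
      A.coeff w • (if p = q + ((FreeMonoid.length w : ℕ) : Fin N) then wgt (uX t) w.toList q else 0)
        = if FreeMonoid.length w = ((p - q : Fin N)).val then
            C (A.coeff w * wgt t w.toList q) * X ^ ((p - q : Fin N)).val else 0 := by
    intro w hw
    have hlw : FreeMonoid.length w ≤ A.coeff.support.sup FreeMonoid.length :=
      Finset.le_sup (f := FreeMonoid.length) hw
    by_cases hc : p = q + ((FreeMonoid.length w : ℕ) : Fin N)
    · have hv : FreeMonoid.length w = ((p - q : Fin N)).val := by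
        rw [hc, add_sub_cancel_left, Fin.val_cast_of_lt (by omega)]
      rw [if_pos hc, if_pos hv, wgt_uX, smul_eq_C_mul, ← hv]
      have : FreeMonoid.length w = w.toList.length := rfl
      rw [← this, map_mul, mul_assoc]
    · have hv : ¬ FreeMonoid.length w = ((p - q : Fin N)).val := by
        intro hv
        apply hc
        have h2 : ((FreeMonoid.length w : ℕ) : Fin N) = p - q := by
          rw [hv, Fin.cast_val_eq_self]
        rw [h2, add_comm, sub_add_cancel]
      rw [if_neg hc, if_neg hv, smul_zero]
  rw [Finset.sum_congr rfl hterm, ← Finset.sum_filter, ← Finset.sum_mul, ← map_sum]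

end Size

theorem key [Infinite k] (A : MonoidAlgebra k (FreeMonoid (Fin d))) (hA : A ≠ 0)
    {N : ℕ} (hN : A.coeff.support.sup FreeMonoid.length < N) :
    ∃ Z : Fin d → Matrix (Fin N) (Fin N) k,
      (evalMat (k := k) k Z
        ((FreeAlgebra.equivMonoidAlgebraFreeMonoid (R := k) (X := Fin d)).symm A)).det ≠ 0 := by
  haveI : NeZero N := ⟨by omega⟩
  set D := A.coeff.support.sup FreeMonoid.length with hD
  obtain ⟨τ, hτ⟩ := exists_tau A hA hN
  set t : Fin d → Fin N → k := fun i q => τ (i, q) with ht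
  have hwgt_eval : ∀ (w : List (Fin d)) (q : Fin N),
      MvPolynomial.eval τ (wgt (uP k d N) w q) = wgt t w q := by
    intro w
    induction w with
    | nil => intro q; simp [wgt]
    | cons i w ih => intro q; rw [wgt, wgt, map_mul, ih]; simp [uP, ht]
  set M := evalMat (k := k) (k[X]) (shiftM (uX t))
      ((FreeAlgebra.equivMonoidAlgebraFreeMonoid (R := k) (X := Fin d)).symm A) with hM
  set γ : Fin N → Fin N → k := fun p q =>
      ∑ w ∈ A.coeff.support.filter (fun w => FreeMonoid.length w = ((p - q : Fin N)).val),
        A.coeff w * wgt t w.toList q with hγ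
  have hMe : ∀ p q, M p q = C (γ p q) * X ^ ((p - q : Fin N)).val := by
    intro p q; rw [hM, M_entry t A hN p q]
  have hvalD : ∀ q : Fin N, ((q + ((D : ℕ) : Fin N) - q : Fin N)).val = D := by
    intro q; rw [add_sub_cancel_left, Fin.val_cast_of_lt hN]
  have hγD : ∀ q : Fin N, γ (q + ((D : ℕ) : Fin N)) q = MvPolynomial.eval τ (Qp A D q) := by
    intro q
    rw [hγ, Qp, map_sum]
    apply Finset.sum_congr
    · congr 1
      funext w
      rw [hvalD]
    · intro w _
      rw [map_mul, MvPolynomial.eval_C, hwgt_eval]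
  have hγhigh : ∀ p q : Fin N, D < ((p - q : Fin N)).val → γ p q = 0 := by
    intro p q hgt
    apply Finset.sum_eq_zero
    intro w hw
    exfalso
    obtain ⟨hw1, hw2⟩ := Finset.mem_filter.mp hw
    have := Finset.le_sup (f := FreeMonoid.length) hw1
    omega
  -- the determinant has nonzero coefficient in degree N * D
  set σ₀ : Equiv.Perm (Fin N) := Equiv.addRight ((D : ℕ) : Fin N) with hσ₀
  have hS : ∀ σ : Equiv.Perm (Fin N),
      (∏ i, M (σ i) i) = C (∏ i, γ (σ i) i) * X ^ (∑ i, ((σ i - i : Fin N)).val) := by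
    intro σ
    rw [Finset.prod_congr rfl fun i _ => hMe (σ i) i, Finset.prod_mul_distrib, ← map_prod,
      Finset.prod_pow_eq_pow_sum]
  have hcoeffσ : ∀ σ : Equiv.Perm (Fin N),
      (((Equiv.Perm.sign σ : ℤ) : k[X]) * ∏ i, M (σ i) i).coeff (N * D)
        = if (∑ i, ((σ i - i : Fin N)).val) = N * D then
            ((Equiv.Perm.sign σ : ℤ) : k) * ∏ i, γ (σ i) i else 0 := by
    intro σ
    rw [hS, ← Polynomial.C_eq_intCast, ← mul_assoc, ← map_mul, Polynomial.coeff_C_mul,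
      Polynomial.coeff_X_pow]
    by_cases hs : (∑ i, ((σ i - i : Fin N)).val) = N * D
    · rw [if_pos hs, if_pos hs.symm, mul_one]
    · rw [if_neg hs, if_neg (fun hh => hs hh.symm), mul_zero]
  have hsum_const : (∑ _i : Fin N, D) = N * D := by
    rw [Finset.sum_const, Finset.card_univ, Fintype.card_fin, smul_eq_mul]
  have hσ₀S : (∑ i, ((σ₀ i - i : Fin N)).val) = N * D := by
    rw [← hsum_const]
    apply Finset.sum_congr rfl
    intro i _
    show ((i + ((D : ℕ) : Fin N) - i : Fin N)).val = D
    exact hvalD i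
  have hγ₀ : ∀ i : Fin N, γ (σ₀ i) i ≠ 0 := by
    intro i
    show γ (i + ((D : ℕ) : Fin N)) i ≠ 0
    rw [hγD]
    exact hτ i
  have hdetc : (M.det).coeff (N * D) ≠ 0 := by
    rw [Matrix.det_apply', Polynomial.finset_sum_coeff,
      Finset.sum_congr rfl fun σ _ => hcoeffσ σ, Finset.sum_eq_single σ₀]
    · rw [if_pos hσ₀S]
      apply mul_ne_zero
      · rcases Int.units_eq_one_or (Equiv.Perm.sign σ₀) with h | h <;> rw [h] <;> simp
      · exact Finset.prod_ne_zero_iff.mpr fun i _ => hγ₀ i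
    · intro σ _ hσne
      by_cases hs : (∑ i, ((σ i - i : Fin N)).val) = N * D
      · rw [if_pos hs]
        -- some entry lies strictly above the D-th diagonal
        have hex : ∃ i : Fin N, D < ((σ i - i : Fin N)).val := by
          by_contra hall
          push_neg at hall
          have hallD : ∀ i : Fin N, ((σ i - i : Fin N)).val = D := by
            by_contra hne
            push_neg at hne
            obtain ⟨i₀, hi₀⟩ := hne
            have hlt : ((σ i₀ - i₀ : Fin N)).val < D := lt_of_le_of_ne (hall i₀) hi₀
            have : (∑ i, ((σ i - i : Fin N)).val) < ∑ _i : Fin N, D :=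
              Finset.sum_lt_sum (fun i _ => hall i) ⟨i₀, Finset.mem_univ i₀, hlt⟩
            omega
          apply hσne
          apply Equiv.ext
          intro i
          have h1 : (σ i - i : Fin N) = ((D : ℕ) : Fin N) := by
            have h2 : ((σ i - i : Fin N)).val = (((D : ℕ) : Fin N)).val := by
              rw [hallD i, Fin.val_cast_of_lt hN]
            exact Fin.val_injective h2
          have : σ i = i + ((D : ℕ) : Fin N) := by
            rw [← h1, add_comm, sub_add_cancel]
          rw [this]
          rfl
        obtain ⟨i₀, hi₀⟩ := hex
        have hz : (∏ i, γ (σ i) i) = 0 :=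
          Finset.prod_eq_zero (Finset.mem_univ i₀) (hγhigh _ _ hi₀)
        rw [hz, mul_zero]
      · rw [if_neg hs]
    · intro h
      exact absurd (Finset.mem_univ σ₀) h
  have hMdet : M.det ≠ 0 := fun h => by rw [h, Polynomial.coeff_zero] at hdetc; exact hdetc rfl
  -- pick a point where the determinant does not vanish
  obtain ⟨s₀, hs₀⟩ := (Set.Finite.infinite_compl
    (Polynomial.finite_setOf_isRoot hMdet)).nonempty
  refine ⟨fun i => (shiftM (uX t) i).map (Polynomial.aeval s₀ : k[X] →ₐ[k] k), ?_⟩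
  rw [← evalMat_map (Polynomial.aeval s₀ : k[X] →ₐ[k] k) (shiftM (uX t)), ← hM]
  have hdm : ((M.map (Polynomial.aeval s₀ : k[X] →ₐ[k] k)).det)
      = Polynomial.aeval s₀ M.det := by
    rw [AlgHom.map_det]
    rfl
  rw [hdm]
  intro hc
  apply hs₀
  show M.det.IsRoot s₀
  rw [Polynomial.IsRoot, ← Polynomial.coe_aeval_eq_eval]
  exact hc


theorem charpoly_conj {n : ℕ} (F H A : Matrix (Fin n) (Fin n) k) (hu : IsUnit A.det)
    (hFA : F * A = A * H) : F.charpoly = H.charpoly := by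
  have hF : F = A * H * A⁻¹ := by
    rw [← hFA, Matrix.mul_nonsing_inv_cancel_right _ _ hu]
  have hmapmul : ∀ (P Q : Matrix (Fin n) (Fin n) k),
      (P * Q).map (C : k → k[X]) = P.map C * Q.map C := by
    intro P Q
    exact Matrix.map_mul (f := (C : k →+* k[X]))
  have hAA : A.map (C : k → k[X]) * (A⁻¹).map C = 1 := by
    rw [← hmapmul, Matrix.mul_nonsing_inv _ hu]
    simp
  have hcomm : ∀ B : Matrix (Fin n) (Fin n) k[X],
      B * Matrix.scalar (Fin n) (X : k[X]) = Matrix.scalar (Fin n) (X : k[X]) * B := by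
    intro B
    exact (Matrix.scalar_commute (X : k[X]) (fun r' => Commute.all _ _) B).symm
  have hcm : Matrix.charmatrix F
      = A.map (C : k → k[X]) * Matrix.charmatrix H * (A⁻¹).map C := by
    show Matrix.scalar (Fin n) (X : k[X]) - (C : k →+* k[X]).mapMatrix F = _
    show _ = A.map (C : k → k[X]) *
      (Matrix.scalar (Fin n) (X : k[X]) - (C : k →+* k[X]).mapMatrix H) * (A⁻¹).map C
    rw [Matrix.mul_sub, Matrix.sub_mul]
    congr 1
    · rw [hcomm (A.map C), Matrix.mul_assoc, hAA, Matrix.mul_one]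
    · show (C : k →+* k[X]).mapMatrix F = A.map (C : k → k[X]) *
        ((C : k →+* k[X]).mapMatrix H) * (A⁻¹).map C
      rw [RingHom.mapMatrix_apply, RingHom.mapMatrix_apply, hF, hmapmul, hmapmul]
  rw [Matrix.charpoly, Matrix.charpoly, hcm, Matrix.det_mul, Matrix.det_mul]
  have : (A.map (C : k → k[X])).det * ((A⁻¹).map (C : k → k[X])).det = 1 := by
    rw [← Matrix.det_mul, hAA, Matrix.det_one]
  calc (A.map C).det * (Matrix.charmatrix H).det * ((A⁻¹).map C).det
      = (Matrix.charmatrix H).det * ((A.map C).det * ((A⁻¹).map C).det) := by ring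
    _ = (Matrix.charmatrix H).det := by rw [this, mul_one]


theorem charpoly_eq_at [Infinite k] (f h a : FreeAlgebra k (Fin d)) (ha : a ≠ 0)
    (hfa : f * a = a * h) {N : ℕ}
    (hN : ((FreeAlgebra.equivMonoidAlgebraFreeMonoid (R := k) (X := Fin d)) a).coeff.support.sup
      FreeMonoid.length < N)
    (Z : Fin d → Matrix (Fin N) (Fin N) k) :
    (evalMat (k := k) k Z f).charpoly = (evalMat (k := k) k Z h).charpoly := by
  set e := (FreeAlgebra.equivMonoidAlgebraFreeMonoid (R := k) (X := Fin d)) with he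
  set R := MvPolynomial (Fin d × Fin N × Fin N) k with hR
  set G : Fin d → Matrix (Fin N) (Fin N) R :=
    (fun i => Matrix.of fun p q => MvPolynomial.X (i, p, q)) with hG
  have hcompat : ∀ (x : (Fin d × Fin N × Fin N) → k) (b : FreeAlgebra k (Fin d)),
      (evalMat (k := k) R G b).map (MvPolynomial.aeval x : R →ₐ[k] k)
        = evalMat (k := k) k (fun i => Matrix.of fun p q => x (i, p, q)) b := by
    intro x b
    rw [evalMat_map]
    have hfun : (fun i => (G i).map (⇑(MvPolynomial.aeval x : R →ₐ[k] k)))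
        = (fun i => Matrix.of fun p q => x (i, p, q)) := by
      funext i
      ext p q
      simp [hG]
    rw [hfun]
  set F := evalMat (k := k) R G f with hF
  set H' := evalMat (k := k) R G h with hH'
  set Aa := evalMat (k := k) R G a with hAa
  have hrel : F * Aa = Aa * H' := by
    rw [hF, hAa, hH', ← map_mul, ← map_mul, hfa]
  have hAdet : Aa.det ≠ 0 := by
    have hea : e a ≠ 0 := fun h0 => ha (by
      have := congrArg e.symm h0
      simpa using this)
    obtain ⟨Z₀, hZ₀⟩ := key (e a) hea hN
    intro h0
    apply hZ₀
    have h1 : e.symm (e a) = a := e.symm_apply_apply a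
    rw [h1]
    have h2 := hcompat (fun v => Z₀ v.1 v.2.1 v.2.2) a
    have h3 : (fun i => Matrix.of fun p q => (fun v : Fin d × Fin N × Fin N =>
        Z₀ v.1 v.2.1 v.2.2) (i, p, q)) = Z₀ := by
      funext i
      ext p q
      rfl
    rw [h3] at h2
    rw [← h2]
    have h4 : ((evalMat (k := k) R G a).map (⇑(MvPolynomial.aeval
        (fun v : Fin d × Fin N × Fin N => Z₀ v.1 v.2.1 v.2.2) : R →ₐ[k] k))).det
        = (MvPolynomial.aeval (fun v : Fin d × Fin N × Fin N => Z₀ v.1 v.2.1 v.2.2) : R →ₐ[k] k)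
          (evalMat (k := k) R G a).det := by
      rw [AlgHom.map_det]
      rfl
    rw [h4, ← hAa, h0, map_zero]
  -- charpoly coefficients agree in the generic matrix ring
  have hcoeff : ∀ i : ℕ, (F.charpoly.coeff i - H'.charpoly.coeff i) * Aa.det = 0 := by
    intro i
    apply MvPolynomial.funext (q := 0)
    intro x
    rw [map_zero]
    have hev : ∀ p : R, MvPolynomial.eval x p = (MvPolynomial.aeval x : R →ₐ[k] k) p := by
      intro p
      rw [← MvPolynomial.coe_aeval_eq_eval]
      rfl
    rw [hev, map_mul, map_sub]
    set φ := (MvPolynomial.aeval x : R →ₐ[k] k) with hφ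
    set Zx : Fin d → Matrix (Fin N) (Fin N) k :=
      (fun i => Matrix.of fun p q => x (i, p, q)) with hZx
    have hFc : (F.map φ) = evalMat (k := k) k Zx f := hcompat x f
    have hHc : (H'.map φ) = evalMat (k := k) k Zx h := hcompat x h
    have hAc : (Aa.map φ) = evalMat (k := k) k Zx a := hcompat x a
    have hcoefmap : ∀ (M : Matrix (Fin N) (Fin N) R),
        φ (M.charpoly.coeff i) = ((M.map φ).charpoly).coeff i := by
      intro M
      have h5 : M.map ⇑φ = M.map (⇑(φ : R →+* k)) := rfl
      rw [h5, Matrix.charpoly_map M (φ : R →+* k), Polynomial.coeff_map]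
      rfl
    rw [hcoefmap F, hcoefmap H', hFc, hHc]
    have hdet : φ Aa.det = (evalMat (k := k) k Zx a).det := by
      rw [AlgHom.map_det, ← hAc]
      rfl
    rw [hdet]
    by_cases hz : (evalMat (k := k) k Zx a).det = 0
    · rw [hz, mul_zero]
    · have hu : IsUnit (evalMat (k := k) k Zx a).det := isUnit_iff_ne_zero.mpr hz
      have hrelx : (evalMat (k := k) k Zx f) * (evalMat (k := k) k Zx a)
          = (evalMat (k := k) k Zx a) * (evalMat (k := k) k Zx h) := by
        rw [← map_mul, ← map_mul, hfa]
      rw [charpoly_conj _ _ _ hu hrelx, sub_self, zero_mul]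
  have hchar : F.charpoly = H'.charpoly := by
    apply Polynomial.ext
    intro i
    have := hcoeff i
    rcases mul_eq_zero.mp this with h1 | h1
    · exact sub_eq_zero.mp h1
    · exact absurd h1 hAdet
  -- specialize to Z
  set x : (Fin d × Fin N × Fin N) → k := fun v => Z v.1 v.2.1 v.2.2 with hx
  have hZx : (fun i => Matrix.of fun p q => x (i, p, q)) = Z := by
    funext i
    ext p q
    rfl
  have h2 := hcompat x f
  have h3 := hcompat x h
  rw [hZx] at h2 h3
  have h4 : ∀ (M : Matrix (Fin N) (Fin N) R),
      ((M.map (⇑(MvPolynomial.aeval x : R →ₐ[k] k))).charpoly)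
        = M.charpoly.map ((MvPolynomial.aeval x : R →ₐ[k] k) : R →+* k) := by
    intro M
    exact Matrix.charpoly_map M _
  rw [← h2, ← h3, h4, h4, hchar]


/-- Block-diagonal embedding as an algebra homomorphism. -/
noncomputable def blockAlg (n m : ℕ) :
    (Matrix (Fin n) (Fin n) k × Matrix (Fin m) (Fin m) k) →ₐ[k]
      Matrix (Fin n ⊕ Fin m) (Fin n ⊕ Fin m) k where
  toFun P := Matrix.fromBlocks P.1 0 0 P.2
  map_one' := Matrix.fromBlocks_one
  map_mul' P Q := by
    rw [Matrix.fromBlocks_multiply]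
    simp
  map_zero' := by
    simp
  map_add' P Q := by
    rw [Matrix.fromBlocks_add]
    simp
  commutes' c := by
    have h1 : (algebraMap k (Matrix (Fin n) (Fin n) k × Matrix (Fin m) (Fin m) k) c)
        = (algebraMap k _ c, algebraMap k _ c) := rfl
    rw [h1]
    simp only [Algebra.algebraMap_eq_smul_one]
    rw [← Matrix.fromBlocks_one (l := Fin n) (m := Fin m), Matrix.fromBlocks_smul, smul_zero,
      smul_zero]

theorem evalMat_block {n m : ℕ} (X : Fin d → Matrix (Fin n) (Fin n) k)
    (W : Fin d → Matrix (Fin m) (Fin m) k) (b : FreeAlgebra k (Fin d)) :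
    evalMat (k := k) k (fun i => Matrix.reindexAlgEquiv k k finSumFinEquiv
        (Matrix.fromBlocks (X i) 0 0 (W i))) b
      = Matrix.reindexAlgEquiv k k finSumFinEquiv
          (Matrix.fromBlocks (evalMat (k := k) k X b) 0 0 (evalMat (k := k) k W b)) := by
  have h : evalMat (k := k) k (fun i => Matrix.reindexAlgEquiv k k finSumFinEquiv
        (Matrix.fromBlocks (X i) 0 0 (W i)))
      = ((Matrix.reindexAlgEquiv k k finSumFinEquiv).toAlgHom.comp
          ((blockAlg n m).comp ((evalMat (k := k) k X).prod (evalMat (k := k) k W)))) := by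
    apply FreeAlgebra.hom_ext
    funext i
    simp [blockAlg, AlgHom.prod]
  rw [h]
  rfl

theorem charpoly_block {n m : ℕ} (P : Matrix (Fin n) (Fin n) k) (Q : Matrix (Fin m) (Fin m) k) :
    (Matrix.reindexAlgEquiv k k finSumFinEquiv (Matrix.fromBlocks P 0 0 Q)).charpoly
      = P.charpoly * Q.charpoly := by
  rw [Matrix.reindexAlgEquiv_apply, Matrix.charpoly_reindex, Matrix.charpoly_fromBlocks_zero₂₁]

theorem det_sub_smul_one {n : ℕ} (M : Matrix (Fin n) (Fin n) k) (μ : k) :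
    (M - μ • (1 : Matrix (Fin n) (Fin n) k)).det = (-1) ^ n * (M.charpoly.eval μ) := by
  have h1 : M.charpoly.eval μ = ((Matrix.charmatrix M).map (eval μ)).det := by
    rw [Matrix.charpoly]
    have h0 := RingHom.map_det (Polynomial.evalRingHom μ) (Matrix.charmatrix M)
    have h0' : eval μ (Matrix.charmatrix M).det
        = ((Polynomial.evalRingHom μ).mapMatrix (Matrix.charmatrix M)).det := h0
    rw [h0']
    rfl
  have h2 : (Matrix.charmatrix M).map (eval μ) = μ • (1 : Matrix (Fin n) (Fin n) k) - M := by
    ext i j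
    by_cases hij : i = j
    · subst hij
      simp [Matrix.charmatrix_apply_eq, Matrix.one_apply]
    · simp [Matrix.charmatrix_apply_ne _ _ _ hij, Matrix.one_apply, hij]
  have h3 : M - μ • (1 : Matrix (Fin n) (Fin n) k)
      = -(μ • (1 : Matrix (Fin n) (Fin n) k) - M) := by
    rw [neg_sub]
  rw [h3, Matrix.det_neg, h1, h2]
  simp


end CharIntw

/-- If `a ≠ 0` and `f a = a h` in `k⟨x⟩`, then `f(X)` and `h(X)` have the same
characteristic polynomial for every matrix tuple `X`; in particular
`det (f(X) - λ I) = det (h(X) - λ I)` for all `λ`, so `L_λ(f) = L_λ(h)` for all `λ`. -/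
theorem charpoly_eq_of_intertwined (k : Type*) [Field k] [IsAlgClosed k] [CharZero k]
    (d : ℕ) (hd : 0 < d)
    (f h a : FreeAlgebra k (Fin d)) (ha : a ≠ 0) (hfa : f * a = a * h) :
    ∀ (n : ℕ) (X : Fin d → Matrix (Fin n) (Fin n) k),
      (matEval k d n X f).charpoly = (matEval k d n X h).charpoly ∧
      ∀ μ : k,
        (matEval k d n X f - μ • (1 : Matrix (Fin n) (Fin n) k)).det =
        (matEval k d n X h - μ • (1 : Matrix (Fin n) (Fin n) k)).det := by
  intro n X
  classical
  set D := ((FreeAlgebra.equivMonoidAlgebraFreeMonoid (R := k) (X := Fin d)) a).coeff.support.sup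
    FreeMonoid.length with hD
  set m := D + 1 with hm
  set W : Fin d → Matrix (Fin m) (Fin m) k := fun _ => 0 with hW
  have hq : (CharIntw.evalMat (k := k) k W f).charpoly
      = (CharIntw.evalMat (k := k) k W h).charpoly :=
    CharIntw.charpoly_eq_at f h a ha hfa (by omega) W
  have hbig := CharIntw.charpoly_eq_at f h a ha hfa (N := n + m) (by omega)
    (fun i => Matrix.reindexAlgEquiv k k finSumFinEquiv (Matrix.fromBlocks (X i) 0 0 (W i)))
  rw [CharIntw.evalMat_block, CharIntw.evalMat_block, CharIntw.charpoly_block,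
    CharIntw.charpoly_block, ← hq] at hbig
  have hmono := Matrix.charpoly_monic (CharIntw.evalMat (k := k) k W f)
  have hcp : (CharIntw.evalMat (k := k) k X f).charpoly
      = (CharIntw.evalMat (k := k) k X h).charpoly :=
    mul_right_cancel₀ hmono.ne_zero hbig
  have hcp' : (matEval k d n X f).charpoly = (matEval k d n X h).charpoly := hcp
  refine ⟨hcp', fun μ => ?_⟩
  rw [CharIntw.det_sub_smul_one (matEval k d n X f) μ,
    CharIntw.det_sub_smul_one (matEval k d n X h) μ, hcp']
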